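/- Let E be a real normed vector space, let D ≥ 1, let N > 0 be a real number, and let R ≥ 0. Let v_1, …, v_D ∈ E and let m_1, …, m_D be real numbers satisfying m_{d+1} = m_d − 1 for all 1 ≤ d < D and m_D ≥ N/8. Suppose that for every d ∈ {1, …, D}, ‖ Σ_{j=1}^{d−1} v_j + m_d · v_d ‖ ≤ R. Then for every d ∈ {1, …, D−1}, ‖ v_{d+1} − v_d ‖ ≤ 16R/N. -/

import Mathlib

/-- telescoping lemma: if the partial sums `Σ_{j<d} v_j + m_d • v_d` are all
bounded by `R` in norm, where the scalars `m_d` decrease by exactly 1 and `m_D ≥ N/8`, then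
consecutive `v_d`'s are `16R/N`-close. -/
theorem consecutive_close_of_bounded_partial_sums
    {E : Type*} [NormedAddCommGroup E] [NormedSpace ℝ E]
    (D : ℕ) (hD : 1 ≤ D) (N : ℝ) (hN : 0 < N) (R : ℝ) (hR : 0 ≤ R)
    (v : ℕ → E) (m : ℕ → ℝ)
    (hm_step : ∀ d : ℕ, 1 ≤ d → d < D → m (d + 1) = m d - 1)
    (hm_last : N / 8 ≤ m D)
    (hbound : ∀ d : ℕ, 1 ≤ d → d ≤ D →
      ‖(∑ j ∈ Finset.Icc 1 (d - 1), v j) + m d • v d‖ ≤ R) :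
    ∀ d : ℕ, 1 ≤ d → d ≤ D - 1 → ‖v (d + 1) - v d‖ ≤ 16 * R / N := by
  have key : ∀ n e : ℕ, 1 ≤ e → e ≤ D → D - e = n → m D ≤ m e := by
    intro n
    induction n with
    | zero =>
      intro e h1 h2 h3
      have : e = D := by omega
      rw [this]
    | succ n ih =>
      intro e h1 h2 h3
      have hlt : e < D := by omega
      have h4 := ih (e + 1) (by omega) hlt (by omega)
      have hstep := hm_step e h1 hlt
      linarith
  intro d hd1 hdD
  have hd2 : d + 1 ≤ D := by omega
  have hlt : d < D := hd2
  have hm := hm_step d hd1 hlt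
  have hmge : N / 8 ≤ m (d + 1) :=
    le_trans hm_last (key (D - (d + 1)) (d + 1) (by omega) hd2 rfl)
  have b1 := hbound d hd1 (by omega)
  have b2 := hbound (d + 1) (by omega) hd2
  have hsum : ∑ j ∈ Finset.Icc 1 ((d + 1) - 1), v j
      = (∑ j ∈ Finset.Icc 1 (d - 1), v j) + v d := by
    have h : (d + 1) - 1 = (d - 1) + 1 := by omega
    rw [h, Finset.sum_Icc_succ_top (by omega : 1 ≤ (d - 1) + 1)]
    congr 2
    omega
  have hdiff : (∑ j ∈ Finset.Icc 1 ((d + 1) - 1), v j) + m (d + 1) • v (d + 1)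
      - ((∑ j ∈ Finset.Icc 1 (d - 1), v j) + m d • v d)
      = m (d + 1) • (v (d + 1) - v d) := by
    rw [hsum, hm]
    module
  have hnorm : ‖m (d + 1) • (v (d + 1) - v d)‖ ≤ 2 * R := by
    rw [← hdiff]
    have := norm_sub_le ((∑ j ∈ Finset.Icc 1 ((d + 1) - 1), v j) + m (d + 1) • v (d + 1))
      ((∑ j ∈ Finset.Icc 1 (d - 1), v j) + m d • v d)
    linarith
  rw [norm_smul, Real.norm_eq_abs, abs_of_pos (by linarith)] at hnorm
  rw [le_div_iff₀ hN]
  nlinarith [norm_nonneg (v (d + 1) - v d)]
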